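/- Let x_1,…,x_n be positive integers with x_1+⋯+x_n = 2N, let Q(x) be the partition constraint graph P(x) together with an additional edge g = {U,W} of weight N, and let C_1 be the configuration that orients g toward W, every edge {U,v_i} toward U, and every edge {W,v_i} toward v_i. Then C_1 is legal, and there exists a reconfiguration sequence starting at C_1 in which each edge is reversed at most once and in which the edge g is reversed at some step, if and only if there exists a subset S ⊆ {1,…,n} with ∑_{i∈S} x_i = N. -/

import Mathlib

/-!
STATEMENT 2: Let x_1,…,x_n be positive integers with x_1+⋯+x_n = 2N, let Q(x)
be the partition constraint graph P(x) together with an additional edge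
g = {U,W} of weight N, and let C_1 be the configuration that orients g toward
W, every edge {U,v_i} toward U, and every edge {W,v_i} toward v_i. Then C_1 is
legal, and there exists a reconfiguration sequence starting at C_1 in which
each edge is reversed at most once and in which the edge g is reversed at some
step, if and only if there exists a subset S ⊆ {1,…,n} with ∑_{i∈S} x_i = N.
-/

/-- A configuration of a constraint graph assigns to each edge one of its
two endpoints (its head). -/
def IsConf {V : Type} (G : SimpleGraph V) (C : Sym2 V → V) : Prop :=
  ∀ e ∈ G.edgeSet, C e ∈ e

/-- A configuration is legal if every vertex receives inflow (total weight of
edges whose head is that vertex) at least its minimum inflow. -/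
def Legal {V : Type} [Fintype V] [DecidableEq V] (G : SimpleGraph V)
    [DecidableRel G.Adj] (w : Sym2 V → ℕ) (μ : V → ℕ) (C : Sym2 V → V) : Prop :=
  ∀ v : V, μ v ≤ ∑ e ∈ G.edgeFinset, if C e = v then w e else 0

/-- Two configurations agree (as orientations of the edges of `G`). -/
def ConfEq {V : Type} (G : SimpleGraph V) (C C' : Sym2 V → V) : Prop :=
  ∀ e ∈ G.edgeSet, C e = C' e

/-- One reconfiguration step: exactly one edge changes its orientation. -/
def Step {V : Type} (G : SimpleGraph V) (C C' : Sym2 V → V) : Prop :=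
  ∃ e ∈ G.edgeSet, C e ≠ C' e ∧ ∀ f ∈ G.edgeSet, f ≠ e → C f = C' f

/-- A reconfiguration sequence: every configuration is a legal configuration
and each consecutive pair differs in the orientation of exactly one edge. -/
def IsReconfSeq {V : Type} [Fintype V] [DecidableEq V] (G : SimpleGraph V)
    [DecidableRel G.Adj] (w : Sym2 V → ℕ) (μ : V → ℕ) {m : ℕ}
    (Cs : Fin (m + 1) → Sym2 V → V) : Prop :=
  (∀ i, IsConf G (Cs i) ∧ Legal G w μ (Cs i)) ∧
    ∀ i : Fin m, Step G (Cs i.castSucc) (Cs i.succ)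

/-- In the sequence, each edge is reversed at most once. -/
def AtMostOnce {V : Type} (G : SimpleGraph V) {m : ℕ}
    (Cs : Fin (m + 1) → Sym2 V → V) : Prop :=
  ∀ e ∈ G.edgeSet, ∀ i j : Fin m,
    Cs i.castSucc e ≠ Cs i.succ e → Cs j.castSucc e ≠ Cs j.succ e → i = j

/-- Vertices of the partition constraint graph: `U`, `W` and `v i` for `i < n`. -/
inductive PVert (n : ℕ) : Type
  | U : PVert n
  | W : PVert n
  | v : Fin n → PVert n
deriving DecidableEq, Fintype

/-- Adjacency of `Q(x)`: `U` and `W` are each joined to every `v i`, and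
additionally `U` is joined to `W`. -/
def qadjB {n : ℕ} : PVert n → PVert n → Bool
  | .U, .v _ => true
  | .v _, .U => true
  | .W, .v _ => true
  | .v _, .W => true
  | .U, .W => true
  | .W, .U => true
  | _, _ => false

/-- The underlying graph of the constraint graph `Q(x)`. -/
def QGraph (n : ℕ) : SimpleGraph (PVert n) where
  Adj a b := qadjB a b
  symm := ⟨by intro a b h; cases a <;> cases b <;> simp_all [qadjB]⟩
  loopless := ⟨by intro a; cases a <;> simp [qadjB]⟩

instance (n : ℕ) : DecidableRel (QGraph n).Adj :=
  fun a b => inferInstanceAs (Decidable (qadjB a b = true))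

/-- Edge weights of `Q(x)` as a symmetric pair function: the edges `{U, v i}`
and `{W, v i}` both have weight `x i`, and the edge `g = {U,W}` has weight `N`. -/
def wPairQ {n : ℕ} (x : Fin n → ℕ) (N : ℕ) : PVert n → PVert n → ℕ
  | .U, .v i => x i
  | .v i, .U => x i
  | .W, .v i => x i
  | .v i, .W => x i
  | .U, .W => N
  | .W, .U => N
  | _, _ => 0

/-- Edge weights of `Q(x)`. -/
def wQ {n : ℕ} (x : Fin n → ℕ) (N : ℕ) : Sym2 (PVert n) → ℕ :=
  Sym2.lift ⟨wPairQ x N, by intro a b; cases a <;> cases b <;> rfl⟩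

/-- Minimum inflows: `μ(U) = μ(W) = N` and `μ(v i) = x i`. -/
def μQ {n : ℕ} (x : Fin n → ℕ) (N : ℕ) : PVert n → ℕ
  | .U => N
  | .W => N
  | .v i => x i

/-- The head function of the initial configuration `C₁`: `g = {U,W}` is
oriented toward `W`, each `{U, v i}` toward `U`, each `{W, v i}` toward `v i`. -/
def initHead {n : ℕ} : PVert n → PVert n → PVert n
  | .U, .v _ => .U
  | .v _, .U => .U
  | .W, .v i => .v i
  | .v i, .W => .v i
  | .U, .W => .W
  | .W, .U => .W
  | _, _ => .U

/-- The initial configuration `C₁`. -/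
def C1 {n : ℕ} : Sym2 (PVert n) → PVert n :=
  Sym2.lift ⟨initHead, by intro a b; cases a <;> cases b <;> rfl⟩

/-- The additional edge `g = {U, W}`. -/
def gEdge (n : ℕ) : Sym2 (PVert n) := s(PVert.U, PVert.W)

namespace Stmt2Aux
open Finset

variable {n : ℕ}

def eU (i : Fin n) : Sym2 (PVert n) := s(PVert.U, PVert.v i)
def eW (i : Fin n) : Sym2 (PVert n) := s(PVert.W, PVert.v i)

lemma mem_edgeSet_iff (e : Sym2 (PVert n)) :
    e ∈ (QGraph n).edgeSet ↔ e = gEdge n ∨ (∃ i, e = eU i) ∨ (∃ i, e = eW i) := by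
  induction e using Sym2.ind with
  | _ a b =>
    cases a <;> cases b <;>
      simp [SimpleGraph.mem_edgeSet, QGraph, qadjB, gEdge, eU, eW, Sym2.eq_iff]

lemma gEdge_mem : gEdge n ∈ (QGraph n).edgeSet := by simp [mem_edgeSet_iff]
lemma eU_mem (i : Fin n) : eU i ∈ (QGraph n).edgeSet := by
  rw [mem_edgeSet_iff]; exact Or.inr (Or.inl ⟨i, rfl⟩)
lemma eW_mem (i : Fin n) : eW i ∈ (QGraph n).edgeSet := by
  rw [mem_edgeSet_iff]; exact Or.inr (Or.inr ⟨i, rfl⟩)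

lemma eU_ne_gEdge (i : Fin n) : eU i ≠ gEdge n := by simp [eU, gEdge, Sym2.eq_iff]
lemma eW_ne_gEdge (i : Fin n) : eW i ≠ gEdge n := by simp [eW, gEdge, Sym2.eq_iff]
lemma eU_ne_eW (i j : Fin n) : eU i ≠ eW j := by simp [eU, eW, Sym2.eq_iff]
lemma eU_inj : Function.Injective (eU (n := n)) := by
  intro i j h; simpa [eU, Sym2.eq_iff] using h
lemma eW_inj : Function.Injective (eW (n := n)) := by
  intro i j h; simpa [eW, Sym2.eq_iff] using h

lemma edgeFinset_eq :
    (QGraph n).edgeFinset =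
      insert (gEdge n) ((univ.image (eU (n := n))) ∪ (univ.image (eW (n := n)))) := by
  ext e
  simp only [SimpleGraph.mem_edgeFinset, mem_edgeSet_iff, mem_insert, mem_union, mem_image,
    mem_univ, true_and]
  constructor
  · rintro (h | ⟨i, h⟩ | ⟨i, h⟩) <;> [exact Or.inl h; exact Or.inr (Or.inl ⟨i, h.symm⟩);
      exact Or.inr (Or.inr ⟨i, h.symm⟩)]
  · rintro (h | ⟨i, h⟩ | ⟨i, h⟩) <;> [exact Or.inl h; exact Or.inr (Or.inl ⟨i, h.symm⟩);
      exact Or.inr (Or.inr ⟨i, h.symm⟩)]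

lemma sum_edge (f : Sym2 (PVert n) → ℕ) :
    ∑ e ∈ (QGraph n).edgeFinset, f e =
      f (gEdge n) + ((∑ i, f (eU i)) + (∑ i, f (eW i))) := by
  rw [edgeFinset_eq, Finset.sum_insert, Finset.sum_union, Finset.sum_image, Finset.sum_image]
  · intro a _ b _ h; exact eW_inj h
  · intro a _ b _ h; exact eU_inj h
  · rw [Finset.disjoint_left]
    rintro e he he'
    simp only [mem_image, mem_univ, true_and] at he he'
    obtain ⟨i, rfl⟩ := he; obtain ⟨j, hj⟩ := he'
    exact eU_ne_eW i j hj.symm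
  · simp only [mem_union, mem_image, mem_univ, true_and, not_or, not_exists]
    constructor
    · intro i h; exact eU_ne_gEdge i h
    · intro i h; exact eW_ne_gEdge i h

variable {x : Fin n → ℕ} {N : ℕ}

lemma wQ_gEdge : wQ x N (gEdge n) = N := rfl
lemma wQ_eU (i : Fin n) : wQ x N (eU i) = x i := rfl
lemma wQ_eW (i : Fin n) : wQ x N (eW i) = x i := rfl
lemma C1_gEdge : C1 (gEdge n) = PVert.W := rfl
lemma C1_eU (i : Fin n) : C1 (eU i) = PVert.U := rfl
lemma C1_eW (i : Fin n) : C1 (eW i) = PVert.v i := rfl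

lemma inflow_eq (C : Sym2 (PVert n) → PVert n) (x : Fin n → ℕ) (N : ℕ) (u : PVert n) :
    (∑ e ∈ (QGraph n).edgeFinset, if C e = u then wQ x N e else 0) =
      (if C (gEdge n) = u then N else 0) +
        ((∑ i, if C (eU i) = u then x i else 0) + (∑ i, if C (eW i) = u then x i else 0)) := by
  rw [sum_edge (fun e => if C e = u then wQ x N e else 0)]
  simp only [wQ_gEdge, wQ_eU, wQ_eW]

lemma isConf_C1 : IsConf (QGraph n) (C1 (n := n)) := by
  intro e he
  rw [mem_edgeSet_iff] at he
  rcases he with rfl | ⟨i, rfl⟩ | ⟨i, rfl⟩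
  · rw [C1_gEdge]; exact Sym2.mem_mk_right _ _
  · rw [C1_eU]; exact Sym2.mem_mk_left _ _
  · rw [C1_eW]; exact Sym2.mem_mk_right _ _

lemma legal_C1 (hsum : ∑ i, x i = 2 * N) :
    Legal (QGraph n) (wQ x N) (μQ x N) (C1 (n := n)) := by
  intro u
  rw [inflow_eq]
  cases u with
  | U =>
    simp only [C1_gEdge, C1_eU, C1_eW, μQ, reduceCtorEq, if_false, if_true, if_pos rfl,
      Finset.sum_const_zero, add_zero, zero_add, hsum]
    omega
  | W =>
    simp [C1_gEdge, C1_eU, C1_eW, μQ]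
  | v i =>
    simp only [C1_gEdge, C1_eU, C1_eW, μQ, reduceCtorEq, if_false, Finset.sum_const_zero,
      add_zero, zero_add]
    have h : (∑ j : Fin n, if (PVert.v j : PVert n) = PVert.v i then x j else 0) = x i := by
      simp [PVert.v.injEq, Finset.sum_ite_eq']
    exact h.ge
end Stmt2Aux
namespace Stmt2Aux
open Finset

section Seq
variable {V : Type} {m : ℕ}

lemma const_of_no_flip (Cs : Fin (m + 1) → Sym2 V → V) (e : Sym2 V) :
    ∀ (b a : Fin (m + 1)), a ≤ b →
      (∀ j : Fin m, a ≤ j.castSucc → j.succ ≤ b → Cs j.castSucc e = Cs j.succ e) →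
      Cs a e = Cs b e := by
  intro b
  induction b using Fin.induction with
  | zero =>
    intro a ha _
    have : a = 0 := le_antisymm ha (Fin.zero_le a)
    rw [this]
  | succ c ih =>
    intro a ha h
    by_cases hac : a ≤ c.castSucc
    · have h1 : Cs a e = Cs c.castSucc e :=
        ih a hac (fun j hj1 hj2 => h j hj1 (le_trans hj2 (by
          simp only [Fin.le_def, Fin.coe_castSucc, Fin.val_succ]; omega)))
      rw [h1]
      exact h c hac le_rfl
    · have : a = c.succ := by
        apply Fin.ext
        simp only [Fin.le_def, Fin.coe_castSucc, Fin.val_succ] at ha hac ⊢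
        omega
      rw [this]

lemma exists_flip (Cs : Fin (m + 1) → Sym2 V → V) (e : Sym2 V) (a b : Fin (m + 1))
    (hab : a ≤ b) (hne : Cs a e ≠ Cs b e) :
    ∃ j : Fin m, a ≤ j.castSucc ∧ j.succ ≤ b ∧ Cs j.castSucc e ≠ Cs j.succ e := by
  by_contra h
  push_neg at h
  exact hne (const_of_no_flip Cs e b a hab (fun j hj1 hj2 => h j hj1 hj2))

end Seq

variable {n : ℕ}

lemma forward {N : ℕ} {x : Fin n → ℕ} (hpos : ∀ i, 0 < x i) (hsum : ∑ i, x i = 2 * N)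
    {m : ℕ} {Cs : Fin (m + 1) → Sym2 (PVert n) → PVert n}
    (h0 : ConfEq (QGraph n) (Cs 0) (C1 (n := n)))
    (hseq : IsReconfSeq (QGraph n) (wQ x N) (μQ x N) Cs)
    (hamo : AtMostOnce (QGraph n) Cs)
    {i0 : Fin m} (hflip : Cs i0.castSucc (gEdge n) ≠ Cs i0.succ (gEdge n)) :
    ∃ S : Finset (Fin n), ∑ i ∈ S, x i = N := by
  obtain ⟨hlegal, hstep⟩ := hseq
  have hgmem : ∀ t, Cs t (gEdge n) = PVert.U ∨ Cs t (gEdge n) = PVert.W := fun t =>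
    Sym2.mem_iff.mp ((hlegal t).1 _ gEdge_mem)
  have heUmem : ∀ t i, Cs t (eU i) = PVert.U ∨ Cs t (eU i) = PVert.v i := fun t i =>
    Sym2.mem_iff.mp ((hlegal t).1 _ (eU_mem i))
  have heWmem : ∀ t i, Cs t (eW i) = PVert.W ∨ Cs t (eW i) = PVert.v i := fun t i =>
    Sym2.mem_iff.mp ((hlegal t).1 _ (eW_mem i))
  -- step i0 flips only g
  have honly : ∀ f ∈ (QGraph n).edgeSet, f ≠ gEdge n →
      Cs i0.castSucc f = Cs i0.succ f := by
    obtain ⟨e, he, hne, hother⟩ := hstep i0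
    have hge : e = gEdge n := by
      by_contra hne'
      exact hflip (hother _ gEdge_mem (fun h => hne' h.symm))
    subst hge; exact hother
  -- g is oriented toward W just before step i0
  have h1 : Cs i0.castSucc (gEdge n) = PVert.W := by
    have h0g : Cs 0 (gEdge n) = PVert.W := by rw [h0 _ gEdge_mem]; rfl
    have hc := const_of_no_flip Cs (gEdge n) i0.castSucc 0 (Fin.zero_le _) ?flips
    · rw [← hc, h0g]
    case flips =>
      intro j hj1 hj2
      by_contra hflipj
      have hji : j = i0 := hamo _ gEdge_mem j i0 hflipj hflip
      subst hji
      simp only [Fin.le_def, Fin.val_succ, Fin.coe_castSucc] at hj2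
      omega
  have h2 : Cs i0.succ (gEdge n) = PVert.U := by
    rcases hgmem i0.succ with h | h
    · exact h
    · exact absurd (h1.trans h.symm) hflip
  -- the two finsets
  set Sf : Finset (Fin n) := univ.filter (fun j => Cs i0.succ (eW j) = PVert.W) with hSf
  set Tf : Finset (Fin n) := univ.filter (fun j => Cs i0.castSucc (eU j) = PVert.U) with hTf
  have hSsum : N ≤ ∑ i ∈ Sf, x i := by
    have hW := (hlegal i0.succ).2 PVert.W
    rw [μQ, inflow_eq] at hW
    rw [h2] at hW
    have hz : ∀ i ∈ (univ : Finset (Fin n)),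
        (if Cs i0.succ (eU i) = PVert.W then x i else 0) = 0 := by
      intro i _
      rcases heUmem i0.succ i with h | h <;> simp [h]
    rw [Finset.sum_congr rfl hz, Finset.sum_const_zero] at hW
    simp only [reduceCtorEq, if_false, zero_add] at hW
    calc N ≤ _ := hW
    _ = ∑ i ∈ Sf, x i := by rw [hSf, Finset.sum_filter]
  have hTsum : N ≤ ∑ i ∈ Tf, x i := by
    have hU := (hlegal i0.castSucc).2 PVert.U
    rw [μQ, inflow_eq] at hU
    rw [h1] at hU
    have hz : ∀ i ∈ (univ : Finset (Fin n)),
        (if Cs i0.castSucc (eW i) = PVert.U then x i else 0) = 0 := by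
      intro i _
      rcases heWmem i0.castSucc i with h | h <;> simp [h]
    rw [Finset.sum_congr rfl hz, Finset.sum_const_zero] at hU
    simp only [reduceCtorEq, if_false, zero_add, add_zero] at hU
    calc N ≤ _ := hU
    _ = ∑ i ∈ Tf, x i := by rw [hTf, Finset.sum_filter]
  -- disjointness
  have hdisj : Disjoint Sf Tf := by
    rw [Finset.disjoint_left]
    intro j hjS hjT
    rw [hSf, Finset.mem_filter] at hjS
    rw [hTf, Finset.mem_filter] at hjT
    -- eW j is toward W just before step i0 as well
    have hWc : Cs i0.castSucc (eW j) = PVert.W := by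
      rw [honly (eW j) (eW_mem j) (eW_ne_gEdge j)]
      exact hjS.2
    have h0W : Cs 0 (eW j) = PVert.v j := by rw [h0 _ (eW_mem j)]; rfl
    -- eW j was flipped at some step k before i0
    obtain ⟨k, -, hk2, hkflip⟩ := exists_flip Cs (eW j) 0 i0.castSucc (Fin.zero_le _)
      (by rw [h0W, hWc]; exact fun h => by exact absurd h (by simp))
    -- before step k, eW j was still toward v j
    have hkc : Cs k.castSucc (eW j) = PVert.v j := by
      have hc := const_of_no_flip Cs (eW j) k.castSucc 0 (Fin.zero_le _) ?flips2
      · rw [← hc, h0W]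
      case flips2 =>
        intro q hq1 hq2
        by_contra hq
        have hqk : q = k := hamo _ (eW_mem j) q k hq hkflip
        subst hqk
        simp only [Fin.le_def, Fin.val_succ, Fin.coe_castSucc] at hq2
        omega
    have hks : Cs k.succ (eW j) = PVert.W := by
      rcases heWmem k.succ j with h | h
      · exact h
      · exact absurd (hkc.trans h.symm) hkflip
    -- legality of v j right after step k forces eU j toward v j
    have hvleg := (hlegal k.succ).2 (PVert.v j)
    rw [μQ, inflow_eq] at hvleg
    have hg0 : (if Cs k.succ (gEdge n) = PVert.v j then N else 0) = 0 := by
      rcases hgmem k.succ with h | h <;> simp [h]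
    have heU0 : (∑ i, if Cs k.succ (eU i) = PVert.v j then x i else 0) =
        (if Cs k.succ (eU j) = PVert.v j then x j else 0) := by
      apply Finset.sum_eq_single_of_mem j (mem_univ j)
      intro i _ hij
      rcases heUmem k.succ i with h | h <;> simp [h, PVert.v.injEq, hij]
    have heW0 : ∀ i ∈ (univ : Finset (Fin n)),
        (if Cs k.succ (eW i) = PVert.v j then x i else 0) = 0 := by
      intro i _
      by_cases hij : i = j
      · subst hij; simp [hks]
      · rcases heWmem k.succ i with h | h <;> simp [h, PVert.v.injEq, hij]
    rw [hg0, heU0, Finset.sum_congr rfl heW0, Finset.sum_const_zero] at hvleg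
    have heUj : Cs k.succ (eU j) = PVert.v j := by
      by_contra hcon
      rw [if_neg hcon] at hvleg
      have := hpos j
      omega
    -- eU j was flipped before k.succ, so it stays toward v j up to i0.castSucc
    have h0U : Cs 0 (eU j) = PVert.U := by rw [h0 _ (eU_mem j)]; rfl
    obtain ⟨p, -, hp2, hpflip⟩ := exists_flip Cs (eU j) 0 k.succ (Fin.zero_le _)
      (by rw [h0U, heUj]; simp)
    have hklei : k.succ ≤ i0.castSucc := hk2
    have hconst : Cs k.succ (eU j) = Cs i0.castSucc (eU j) := by
      apply const_of_no_flip Cs (eU j) i0.castSucc k.succ hklei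
      intro q hq1 hq2
      by_contra hq
      have hqp : q = p := hamo _ (eU_mem j) q p hq hpflip
      subst hqp
      simp only [Fin.le_def, Fin.val_succ, Fin.coe_castSucc] at hq1 hp2
      omega
    rw [← hconst, heUj] at hjT
    exact absurd hjT.2 (by simp)
  -- conclude
  have htot : ∑ i ∈ Sf, x i + ∑ i ∈ Tf, x i ≤ 2 * N := by
    rw [← Finset.sum_union hdisj, ← hsum]
    exact Finset.sum_le_sum_of_subset (Finset.subset_univ _)
  exact ⟨Sf, by omega⟩
end Stmt2Aux
namespace Stmt2Aux
open Finset

variable {n : ℕ}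

section Construction
variable (S : Finset (Fin n))

/-- Enumeration of `S`. -/
noncomputable def sig (j : Fin S.card) : Fin n := (S.equivFin.symm j : Fin n)

lemma sig_inj {j j' : Fin S.card} (h : sig S j = sig S j') : j = j' :=
  S.equivFin.symm.injective (Subtype.coe_injective h)

lemma sig_mem (j : Fin S.card) : sig S j ∈ S := (S.equivFin.symm j).2

lemma mem_iff_sig {i : Fin n} : i ∈ S ↔ ∃ j, sig S j = i :=
  ⟨fun hi => ⟨S.equivFin ⟨i, hi⟩, by simp [sig]⟩, fun ⟨j, hj⟩ => hj ▸ sig_mem S j⟩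

def condU (t : ℕ) (i : Fin n) : Prop :=
  ∃ j : Fin S.card, sig S j = i ∧ 2 * (j : ℕ) + 1 ≤ t

def condW (t : ℕ) (i : Fin n) : Prop :=
  ∃ j : Fin S.card, sig S j = i ∧ 2 * (j : ℕ) + 2 ≤ t

noncomputable instance (t : ℕ) (i : Fin n) : Decidable (condU S t i) :=
  inferInstanceAs (Decidable (∃ j : Fin S.card, sig S j = i ∧ 2 * (j : ℕ) + 1 ≤ t))

noncomputable instance (t : ℕ) (i : Fin n) : Decidable (condW S t i) :=
  inferInstanceAs (Decidable (∃ j : Fin S.card, sig S j = i ∧ 2 * (j : ℕ) + 2 ≤ t))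

noncomputable def hdU (t : ℕ) (i : Fin n) : PVert n := if condU S t i then PVert.v i else PVert.U
noncomputable def hdW (t : ℕ) (i : Fin n) : PVert n := if condW S t i then PVert.W else PVert.v i
noncomputable def hdG (t : ℕ) : PVert n := if 2 * S.card + 1 ≤ t then PVert.U else PVert.W

noncomputable def headAt (t : ℕ) : PVert n → PVert n → PVert n
  | .U, .v i => hdU S t i
  | .v i, .U => hdU S t i
  | .W, .v i => hdW S t i
  | .v i, .W => hdW S t i
  | .U, .W => hdG S t
  | .W, .U => hdG S t
  | .U, .U => .U
  | .W, .W => .U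
  | .v _, .v _ => .U

noncomputable def CsAt (t : ℕ) : Sym2 (PVert n) → PVert n :=
  Sym2.lift ⟨headAt S t, by intro a b; cases a <;> cases b <;> rfl⟩

lemma CsAt_gEdge (t : ℕ) : CsAt S t (gEdge n) = hdG S t := rfl
lemma CsAt_eU (t : ℕ) (i : Fin n) : CsAt S t (eU i) = hdU S t i := rfl
lemma CsAt_eW (t : ℕ) (i : Fin n) : CsAt S t (eW i) = hdW S t i := rfl

lemma condU_mono {t t' : ℕ} (h : t ≤ t') {i : Fin n} (hc : condU S t i) : condU S t' i := by
  obtain ⟨j, hj, hle⟩ := hc; exact ⟨j, hj, le_trans hle h⟩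

lemma condW_condU {t : ℕ} {i : Fin n} (hc : condW S t i) : condU S t i := by
  obtain ⟨j, hj, hle⟩ := hc; exact ⟨j, hj, by omega⟩

lemma condU_mem {t : ℕ} {i : Fin n} (hc : condU S t i) : i ∈ S := by
  obtain ⟨j, hj, _⟩ := hc; exact hj ▸ sig_mem S j

lemma condW_last {i : Fin n} : condW S (2 * S.card + 1) i ↔ i ∈ S := by
  constructor
  · rintro ⟨j, hj, -⟩; exact hj ▸ sig_mem S j
  · intro hi
    obtain ⟨j, hj⟩ := (mem_iff_sig S).mp hi
    exact ⟨j, hj, by have := j.2; omega⟩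

lemma hdU_congr {t t' : ℕ} {i : Fin n} (h : condU S t i ↔ condU S t' i) :
    hdU S t i = hdU S t' i := by
  simp only [hdU]; rw [if_congr h rfl rfl]

lemma hdW_congr {t t' : ℕ} {i : Fin n} (h : condW S t i ↔ condW S t' i) :
    hdW S t i = hdW S t' i := by
  simp only [hdW]; rw [if_congr h rfl rfl]

lemma hdG_congr {t t' : ℕ} (h : 2 * S.card + 1 ≤ t ↔ 2 * S.card + 1 ≤ t') :
    hdG S t = hdG S t' := by
  simp only [hdG]; rw [if_congr h rfl rfl]

lemma isConf_CsAt (t : ℕ) : IsConf (QGraph n) (CsAt S t) := by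
  intro e he
  rw [mem_edgeSet_iff] at he
  rcases he with rfl | ⟨i, rfl⟩ | ⟨i, rfl⟩
  · rw [CsAt_gEdge]; unfold hdG
    split
    · exact Sym2.mem_mk_left _ _
    · exact Sym2.mem_mk_right _ _
  · rw [CsAt_eU]; unfold hdU
    split
    · exact Sym2.mem_mk_right _ _
    · exact Sym2.mem_mk_left _ _
  · rw [CsAt_eW]; unfold hdW
    split
    · exact Sym2.mem_mk_left _ _
    · exact Sym2.mem_mk_right _ _

variable {x : Fin n → ℕ} {N : ℕ}

lemma legal_CsAt (hsum : ∑ i, x i = 2 * N) (hS : ∑ i ∈ S, x i = N)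
    {t : ℕ} (ht : t ≤ 2 * S.card + 1) :
    Legal (QGraph n) (wQ x N) (μQ x N) (CsAt S t) := by
  intro u
  rw [inflow_eq]
  simp only [CsAt_gEdge, CsAt_eU, CsAt_eW]
  cases u with
  | U =>
    have h1 : ∀ i ∈ (univ : Finset (Fin n)),
        (if hdU S t i = PVert.U then x i else 0) = (if condU S t i then 0 else x i) := by
      intro i _
      by_cases h : condU S t i <;> simp [hdU, h]
    have h2 : ∀ i ∈ (univ : Finset (Fin n)),
        (if hdW S t i = PVert.U then x i else 0) = 0 := by
      intro i _
      by_cases h : condW S t i <;> simp [hdW, h]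
    erw [Finset.sum_congr rfl h1, Finset.sum_congr rfl h2, Finset.sum_const_zero, add_zero]
    have key : (∑ i, if condU S t i then 0 else x i) + (∑ i, if condU S t i then x i else 0)
        = 2 * N := by
      rw [← Finset.sum_add_distrib, ← hsum]
      exact Finset.sum_congr rfl (fun i _ => by by_cases h : condU S t i <;> simp [h])
    have hle : (∑ i, if condU S t i then x i else 0) ≤ N := by
      rw [← hS, ← Finset.sum_filter]
      exact Finset.sum_le_sum_of_subset (fun i hi => condU_mem S (Finset.mem_filter.mp hi).2)
    have hG : (if hdG S t = PVert.U then N else 0) = (if 2 * S.card + 1 ≤ t then N else 0) := by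
      by_cases h : 2 * S.card + 1 ≤ t <;> simp [hdG, h]
    erw [hG]
    simp only [μQ]
    by_cases h : 2 * S.card + 1 ≤ t
    · rw [if_pos h]; omega
    · rw [if_neg h]
      -- we need N ≤ sum of unflipped; since flipped ≤ N and total 2N
      omega
  | W =>
    have h1 : ∀ i ∈ (univ : Finset (Fin n)),
        (if hdU S t i = PVert.W then x i else 0) = 0 := by
      intro i _
      by_cases h : condU S t i <;> simp [hdU, h]
    have h2 : ∀ i ∈ (univ : Finset (Fin n)),
        (if hdW S t i = PVert.W then x i else 0) = (if condW S t i then x i else 0) := by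
      intro i _
      by_cases h : condW S t i <;> simp [hdW, h]
    erw [Finset.sum_congr rfl h1, Finset.sum_congr rfl h2, Finset.sum_const_zero, zero_add]
    simp only [μQ]
    by_cases h : 2 * S.card + 1 ≤ t
    · have hteq : t = 2 * S.card + 1 := by omega
      subst hteq
      have : (∑ i, if condW S (2 * S.card + 1) i then x i else 0) = N := by
        rw [← hS]
        rw [Finset.sum_congr rfl (fun i _ => by rw [if_congr (condW_last S) rfl rfl])]
        rw [Finset.sum_ite_mem, Finset.univ_inter]
      omega
    · have : hdG S t = PVert.W := by simp [hdG, h]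
      erw [if_pos this]
      omega
  | v i =>
    have hG : (if hdG S t = PVert.v i then N else 0) = 0 := by
      unfold hdG; split <;> simp
    have h1 : (∑ i', if hdU S t i' = PVert.v i then x i' else 0) =
        (if condU S t i then x i else 0) := by
      rw [Finset.sum_eq_single_of_mem i (mem_univ i)]
      · by_cases h : condU S t i <;> simp [hdU, h]
      · intro i' _ hne
        by_cases h : condU S t i' <;> simp [hdU, h, PVert.v.injEq, hne]
    have h2 : (∑ i', if hdW S t i' = PVert.v i then x i' else 0) =
        (if condW S t i then 0 else x i) := by
      rw [Finset.sum_eq_single_of_mem i (mem_univ i)]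
      · by_cases h : condW S t i <;> simp [hdW, h]
      · intro i' _ hne
        by_cases h : condW S t i' <;> simp [hdW, h, PVert.v.injEq, hne]
    erw [hG, h1, h2, zero_add]
    simp only [μQ]
    by_cases h : condW S t i
    · rw [if_pos (condW_condU S h), if_pos h]; omega
    · rw [if_neg h]
      split <;> omega

end Construction
end Stmt2Aux
namespace Stmt2Aux
open Finset

variable {n : ℕ} (S : Finset (Fin n))

lemma hdU_flip {t : ℕ} {i : Fin n} (h : hdU S t i ≠ hdU S (t + 1) i) :
    ∃ j : Fin S.card, sig S j = i ∧ t = 2 * (j : ℕ) := by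
  have hcond : ¬ condU S t i ∧ condU S (t + 1) i := by
    by_cases a : condU S t i
    · exact absurd (hdU_congr S ⟨fun _ => condU_mono S (by omega) a, fun _ => a⟩) h
    · by_cases b : condU S (t + 1) i
      · exact ⟨a, b⟩
      · exact absurd (hdU_congr S ⟨fun h' => absurd h' a, fun h' => absurd h' b⟩) h
  obtain ⟨j, hj, hle⟩ := hcond.2
  have hnc := hcond.1
  refine ⟨j, hj, ?_⟩
  have : ¬ (2 * (j : ℕ) + 1 ≤ t) := fun hh => hnc ⟨j, hj, hh⟩
  omega

lemma hdW_flip {t : ℕ} {i : Fin n} (h : hdW S t i ≠ hdW S (t + 1) i) :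
    ∃ j : Fin S.card, sig S j = i ∧ t = 2 * (j : ℕ) + 1 := by
  have hcond : ¬ condW S t i ∧ condW S (t + 1) i := by
    by_cases a : condW S t i
    · refine absurd (hdW_congr S ⟨fun _ => ?_, fun _ => a⟩) h
      obtain ⟨j, hj, hle⟩ := a; exact ⟨j, hj, by omega⟩
    · by_cases b : condW S (t + 1) i
      · exact ⟨a, b⟩
      · exact absurd (hdW_congr S ⟨fun h' => absurd h' a, fun h' => absurd h' b⟩) h
  obtain ⟨j, hj, hle⟩ := hcond.2
  have hnc := hcond.1
  refine ⟨j, hj, ?_⟩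
  have : ¬ (2 * (j : ℕ) + 2 ≤ t) := fun hh => hnc ⟨j, hj, hh⟩
  omega

lemma hdG_flip {t : ℕ} (h : hdG S t ≠ hdG S (t + 1)) : t = 2 * S.card := by
  by_contra hc
  exact h (hdG_congr S (by omega))

lemma step_CsAt {t : ℕ} (ht : t < 2 * S.card + 1) :
    Step (QGraph n) (CsAt S t) (CsAt S (t + 1)) := by
  by_cases h2k : t = 2 * S.card
  · refine ⟨gEdge n, gEdge_mem, ?_, ?_⟩
    · rw [CsAt_gEdge, CsAt_gEdge]
      subst h2k
      rw [hdG, hdG, if_neg (by omega), if_pos (by omega)]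
      simp
    · intro f hf hne
      rw [mem_edgeSet_iff] at hf
      rcases hf with rfl | ⟨i, rfl⟩ | ⟨i, rfl⟩
      · exact absurd rfl hne
      · rw [CsAt_eU, CsAt_eU]
        apply hdU_congr
        constructor <;> rintro ⟨j, hj, hle⟩ <;> exact ⟨j, hj, by have := j.2; omega⟩
      · rw [CsAt_eW, CsAt_eW]
        apply hdW_congr
        constructor <;> rintro ⟨j, hj, hle⟩ <;> exact ⟨j, hj, by have := j.2; omega⟩
  · have htlt : t < 2 * S.card := by omega
    set j0 : Fin S.card := ⟨t / 2, by omega⟩ with hj0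
    have hj0v : (j0 : ℕ) = t / 2 := rfl
    by_cases hev : t % 2 = 0
    · have ht2 : t = 2 * (j0 : ℕ) := by omega
      refine ⟨eU (sig S j0), eU_mem _, ?_, ?_⟩
      · rw [CsAt_eU, CsAt_eU]
        have hnc : ¬ condU S t (sig S j0) := by
          rintro ⟨j', hj', hle⟩
          have hjj : j' = j0 := sig_inj S hj'
          subst hjj; omega
        have hc : condU S (t + 1) (sig S j0) := ⟨j0, rfl, by omega⟩
        rw [hdU, hdU, if_neg hnc, if_pos hc]
        simp
      · intro f hf hne
        rw [mem_edgeSet_iff] at hf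
        rcases hf with rfl | ⟨i, rfl⟩ | ⟨i, rfl⟩
        · rw [CsAt_gEdge, CsAt_gEdge]; exact hdG_congr S (by omega)
        · have hine : i ≠ sig S j0 := fun h => hne (by rw [h])
          rw [CsAt_eU, CsAt_eU]
          apply hdU_congr
          constructor <;> rintro ⟨j', hj', hle⟩ <;> refine ⟨j', hj', ?_⟩ <;>
          · have hjne : (j' : ℕ) ≠ (j0 : ℕ) := fun hh =>
              hine (by rw [← hj']; exact congrArg (sig S) (Fin.ext hh))
            omega
        · rw [CsAt_eW, CsAt_eW]
          apply hdW_congr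
          constructor <;> rintro ⟨j', hj', hle⟩ <;> exact ⟨j', hj', by omega⟩
    · have ht2 : t = 2 * (j0 : ℕ) + 1 := by omega
      refine ⟨eW (sig S j0), eW_mem _, ?_, ?_⟩
      · rw [CsAt_eW, CsAt_eW]
        have hnc : ¬ condW S t (sig S j0) := by
          rintro ⟨j', hj', hle⟩
          have hjj : j' = j0 := sig_inj S hj'
          subst hjj; omega
        have hc : condW S (t + 1) (sig S j0) := ⟨j0, rfl, by omega⟩
        rw [hdW, hdW, if_neg hnc, if_pos hc]
        simp
      · intro f hf hne
        rw [mem_edgeSet_iff] at hf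
        rcases hf with rfl | ⟨i, rfl⟩ | ⟨i, rfl⟩
        · rw [CsAt_gEdge, CsAt_gEdge]; exact hdG_congr S (by omega)
        · rw [CsAt_eU, CsAt_eU]
          apply hdU_congr
          constructor <;> rintro ⟨j', hj', hle⟩ <;> exact ⟨j', hj', by omega⟩
        · have hine : i ≠ sig S j0 := fun h => hne (by rw [h])
          rw [CsAt_eW, CsAt_eW]
          apply hdW_congr
          constructor <;> rintro ⟨j', hj', hle⟩ <;> refine ⟨j', hj', ?_⟩ <;>
          · have hjne : (j' : ℕ) ≠ (j0 : ℕ) := fun hh =>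
              hine (by rw [← hj']; exact congrArg (sig S) (Fin.ext hh))
            omega

lemma amo_CsAt :
    AtMostOnce (QGraph n) (fun t : Fin (2 * S.card + 1 + 1) => CsAt S (t : ℕ)) := by
  intro e he t t' h1 h2
  simp only [Fin.coe_castSucc, Fin.val_succ] at h1 h2
  rw [mem_edgeSet_iff] at he
  rcases he with rfl | ⟨i, rfl⟩ | ⟨i, rfl⟩
  · rw [CsAt_gEdge, CsAt_gEdge] at h1 h2
    have e1 := hdG_flip S h1
    have e2 := hdG_flip S h2
    exact Fin.ext (by omega)
  · rw [CsAt_eU, CsAt_eU] at h1 h2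
    obtain ⟨j, hj, e1⟩ := hdU_flip S h1
    obtain ⟨j', hj', e2⟩ := hdU_flip S h2
    have : j = j' := sig_inj S (hj.trans hj'.symm)
    subst this
    exact Fin.ext (by omega)
  · rw [CsAt_eW, CsAt_eW] at h1 h2
    obtain ⟨j, hj, e1⟩ := hdW_flip S h1
    obtain ⟨j', hj', e2⟩ := hdW_flip S h2
    have : j = j' := sig_inj S (hj.trans hj'.symm)
    subst this
    exact Fin.ext (by omega)

lemma confEq_CsAt_zero : ConfEq (QGraph n) (CsAt S 0) (C1 (n := n)) := by
  intro e he
  rw [mem_edgeSet_iff] at he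
  rcases he with rfl | ⟨i, rfl⟩ | ⟨i, rfl⟩
  · rw [CsAt_gEdge, hdG, if_neg (by omega)]; rfl
  · rw [CsAt_eU, hdU, if_neg (by rintro ⟨j, hj, hle⟩; omega)]; rfl
  · rw [CsAt_eW, hdW, if_neg (by rintro ⟨j, hj, hle⟩; omega)]; rfl

lemma backward {x : Fin n → ℕ} {N : ℕ} (hsum : ∑ i, x i = 2 * N)
    (hS : ∑ i ∈ S, x i = N) :
    ∃ (m : ℕ) (Cs : Fin (m + 1) → Sym2 (PVert n) → PVert n),
      ConfEq (QGraph n) (Cs 0) (C1 (n := n)) ∧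
      IsReconfSeq (QGraph n) (wQ x N) (μQ x N) Cs ∧
      AtMostOnce (QGraph n) Cs ∧
      ∃ i : Fin m, Cs i.castSucc (gEdge n) ≠ Cs i.succ (gEdge n) := by
  refine ⟨2 * S.card + 1, fun t => CsAt S (t : ℕ), ?_, ⟨?_, ?_⟩, amo_CsAt S, ?_⟩
  · simpa using confEq_CsAt_zero S
  · intro t
    exact ⟨isConf_CsAt S _, legal_CsAt S hsum hS (by have := t.isLt; omega)⟩
  · intro t
    have hstep := step_CsAt S t.isLt
    simpa only [Fin.coe_castSucc, Fin.val_succ] using hstep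
  · have hlt : 2 * S.card < 2 * S.card + 1 := by omega
    have hflip : CsAt S (2 * S.card) (gEdge n) ≠ CsAt S (2 * S.card + 1) (gEdge n) := by
      rw [CsAt_gEdge, CsAt_gEdge, hdG, hdG, if_neg (by omega), if_pos (by omega)]
      simp
    exact ⟨⟨2 * S.card, hlt⟩, hflip⟩

end Stmt2Aux

theorem stmt2 (n N : ℕ) (x : Fin n → ℕ) (hpos : ∀ i, 0 < x i)
    (hsum : ∑ i, x i = 2 * N) :
    IsConf (QGraph n) (C1 (n := n)) ∧
    Legal (QGraph n) (wQ x N) (μQ x N) (C1 (n := n)) ∧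
    ((∃ (m : ℕ) (Cs : Fin (m + 1) → Sym2 (PVert n) → PVert n),
        ConfEq (QGraph n) (Cs 0) (C1 (n := n)) ∧
        IsReconfSeq (QGraph n) (wQ x N) (μQ x N) Cs ∧
        AtMostOnce (QGraph n) Cs ∧
        ∃ i : Fin m, Cs i.castSucc (gEdge n) ≠ Cs i.succ (gEdge n)) ↔
      ∃ S : Finset (Fin n), ∑ i ∈ S, x i = N) := by
  refine ⟨Stmt2Aux.isConf_C1, Stmt2Aux.legal_C1 hsum, ?_⟩
  constructor
  · rintro ⟨m, Cs, h0, hseq, hamo, i0, hflip⟩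
    exact Stmt2Aux.forward hpos hsum h0 hseq hamo hflip
  · rintro ⟨S, hS⟩
    exact Stmt2Aux.backward S hsum hS
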